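/- If x is a marked node whose candidate sets C_i(x) store, for every 0 ≤ i ≤ ⌈log₂ depth(x)⌉, all (τ/2)-majorities of the upward path P_i(x) of length min(1+2^i, 1+depth(x)) from x, then for every proper ancestor z of x, all τ-majorities of the path from x to z belong to C_{⌈log₂ (depth(x)−depth(z))⌉}(x), and |C_i(x)| ≤ 2/τ for every i. -/

import Mathlib

/-- If for every 0 ≤ i ≤ ⌈log₂ depth(x)⌉ the candidate set C_i(x) is the set of
(τ/2)-majorities of the upward path P_i(x) of length min(1+2^i, 1+depth(x)) from x,
then for every proper ancestor z of x (at distance d = depth(x) − depth(z)) all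
τ-majorities of the path from x to z belong to C_{⌈log₂ d⌉}(x), and |C_i(x)| ≤ 2/τ. -/
theorem stmt18 (τ : ℝ) (hτ0 : 0 < τ) (hτ1 : τ < 1)
    (V : Type) (parent : V → V) (label : V → ℕ) (depth : V → ℕ) (x : V) :
    let P : ℕ → Multiset ℕ := fun i =>
      (Multiset.range (min (2 ^ i) (depth x) + 1)).map (fun k => label (parent^[k] x))
    let C : ℕ → Set ℕ := fun i =>
      {ℓ | (τ / 2) * ((P i).card : ℝ) < (((P i).count ℓ : ℕ) : ℝ)}
    (∀ d : ℕ, 0 < d → d ≤ depth x → ∀ ℓ : ℕ,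
        τ * ((((Multiset.range (d + 1)).map (fun k => label (parent^[k] x))).card : ℕ) : ℝ)
            < ((((Multiset.range (d + 1)).map (fun k => label (parent^[k] x))).count ℓ : ℕ) : ℝ)
        → ℓ ∈ C (Nat.clog 2 d)) ∧
    (∀ i ≤ Nat.clog 2 (depth x), (Nat.card (C i) : ℝ) ≤ 2 / τ) := by
  intro P C
  have hPcard : ∀ i, (P i).card = min (2 ^ i) (depth x) + 1 := by
    intro i; simp [P]
  constructor
  · intro d hd hdx ℓ hmaj
    set i := Nat.clog 2 d with hi
    have hd2i : d ≤ 2 ^ i := Nat.le_pow_clog (by norm_num) d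
    have h2i2d : 2 ^ i < 2 * d := by
      rcases eq_or_lt_of_le (show 1 ≤ d from hd) with h1 | h1
      · have : i = 0 := by rw [hi, ← h1]; exact Nat.clog_one_right 2
        rw [this, ← h1]; norm_num
      · have hipos : 0 < i := Nat.clog_pos (by norm_num) h1
        have hp : 2 ^ (i - 1) < d := by
          have := Nat.pow_pred_clog_lt_self (b := 2) (by norm_num) h1
          simpa [hi, Nat.pred_eq_sub_one] using this
        calc 2 ^ i = 2 * 2 ^ (i - 1) := by
              rw [← pow_succ']; congr 1; omega
          _ < 2 * d := by omega
    set m := min (2 ^ i) (depth x) with hm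
    have hdm : d ≤ m := le_min hd2i hdx
    -- count monotonicity
    have hle : (Multiset.range (d + 1)).map (fun k => label (parent^[k] x)) ≤ P i := by
      apply Multiset.map_le_map
      rw [Multiset.le_iff_subset (Multiset.nodup_range _), Multiset.range_subset]
      omega
    have hcount : ((Multiset.range (d + 1)).map (fun k => label (parent^[k] x))).count ℓ
        ≤ (P i).count ℓ := Multiset.count_le_of_le ℓ hle
    simp only [C, Set.mem_setOf_eq]
    have hcard : ((P i).card : ℝ) = (m : ℝ) + 1 := by
      have h := hPcard i
      rw [← hm] at h
      exact_mod_cast congrArg (Nat.cast (R := ℝ)) h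
    rw [hcard]
    have hdc : (((Multiset.range (d + 1)).map (fun k => label (parent^[k] x))).card : ℕ)
        = d + 1 := by simp
    rw [hdc] at hmaj
    have h1 : τ / 2 * ((m : ℝ) + 1) ≤ τ * d := by
      have hm2d : (m : ℝ) + 1 ≤ 2 * d := by
        have : m + 1 ≤ 2 * d := by omega
        exact_mod_cast this
      nlinarith
    have h2 : τ * (d : ℝ) < τ * ((d : ℝ) + 1) := by nlinarith
    push_cast at hmaj
    calc τ / 2 * ((m : ℝ) + 1) ≤ τ * d := h1
      _ < τ * ((d:ℝ) + 1) := h2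
      _ < _ := hmaj
      _ ≤ _ := by exact_mod_cast hcount
  · intro i _
    set M := P i with hM
    have hMcard : 0 < M.card := by rw [hPcard]; exact Nat.succ_pos _
    set S : Finset ℕ := M.toFinset.filter
      (fun ℓ => (τ / 2) * (M.card : ℝ) < ((M.count ℓ : ℕ) : ℝ)) with hS
    have hCS : C i = ↑S := by
      ext ℓ
      simp only [C, Set.mem_setOf_eq, hS, Finset.coe_filter, Multiset.mem_toFinset]
      constructor
      · intro h
        refine ⟨?_, h⟩
        have hpos : (0:ℝ) < (M.count ℓ : ℝ) := by
          refine lt_of_le_of_lt ?_ h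
          positivity
        have : 0 < M.count ℓ := by exact_mod_cast hpos
        exact Multiset.count_pos.mp this
      · exact fun h => h.2
    rw [hCS, Nat.card_coe_set_eq, Set.ncard_coe_finset]
    -- sum of counts over S bounds
    have hsum : ∑ ℓ ∈ S, M.count ℓ ≤ M.card := by
      calc ∑ ℓ ∈ S, M.count ℓ ≤ ∑ ℓ ∈ M.toFinset, M.count ℓ :=
            Finset.sum_le_sum_of_subset (Finset.filter_subset _ _)
        _ = M.card := Multiset.toFinset_sum_count_eq M
    have hlb : (S.card : ℝ) * ((τ / 2) * (M.card : ℝ)) ≤ ∑ ℓ ∈ S, (M.count ℓ : ℝ) := by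
      have := Finset.card_nsmul_le_sum S (fun ℓ => (M.count ℓ : ℝ)) ((τ / 2) * (M.card : ℝ))
        (fun ℓ hℓ => by
          simp only [hS, Finset.mem_filter] at hℓ
          exact hℓ.2.le)
      simpa [nsmul_eq_mul] using this
    have hsum' : (∑ ℓ ∈ S, (M.count ℓ : ℝ)) ≤ (M.card : ℝ) := by
      push_cast [← Nat.cast_sum]
      exact_mod_cast hsum
    have key : (S.card : ℝ) * (τ / 2) * (M.card : ℝ) ≤ (M.card : ℝ) := by
      nlinarith
    have hMc : (0:ℝ) < (M.card : ℝ) := by exact_mod_cast hMcard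
    rw [le_div_iff₀ hτ0]
    nlinarith [key, hMc, mul_pos hτ0 hMc]
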